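/- Let X be a random vector in ℝ^d with E‖X‖² < ∞, mean m_x and covariance Σ_x, and let ω be an MCAR mask with probability vector p ∈ (0,1]^d, independent of X. Put Σ_x^NA := Cov(X ⊙ ω) and m_x^NA := E[X ⊙ ω]. Then the covariance of X can be recovered from the masked quantities by the debiasing identity Σ_x = P⁻¹ Σ_x^NA P⁻¹ + P⁻¹(I_d − P⁻¹) diag(Σ_x^NA) + P⁻¹(I_d − P⁻¹) diag(m_x^NA) diag(m_x^NA). -/

import Mathlib

open MeasureTheory ProbabilityTheory Matrix

/-- The mean vector of a random vector, defined coordinatewise. -/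
noncomputable def meanVec {Ω : Type*} [MeasurableSpace Ω] (μ : Measure Ω) {d : ℕ}
    (X : Ω → Fin d → ℝ) : Fin d → ℝ :=
  fun i => ∫ a, X a i ∂μ

/-- The covariance matrix `E[(X - EX)(X - EX)ᵀ]` of a random vector, defined entrywise. -/
noncomputable def covMatrix {Ω : Type*} [MeasurableSpace Ω] (μ : Measure Ω) {d : ℕ}
    (X : Ω → Fin d → ℝ) : Matrix (Fin d) (Fin d) ℝ :=
  Matrix.of fun i j => ∫ a, (X a i - meanVec μ X i) * (X a j - meanVec μ X j) ∂μ

private lemma cov_expand {Ω : Type*} [MeasurableSpace Ω] (μ : Measure Ω)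
    [IsProbabilityMeasure μ] (f g : Ω → ℝ) (hf : Integrable f μ) (hg : Integrable g μ)
    (hfg : Integrable (fun a => f a * g a) μ) :
    ∫ a, (f a - ∫ b, f b ∂μ) * (g a - ∫ b, g b ∂μ) ∂μ
      = (∫ a, f a * g a ∂μ) - (∫ a, f a ∂μ) * (∫ a, g a ∂μ) := by
  set F := ∫ b, f b ∂μ with hF
  set G := ∫ b, g b ∂μ with hG
  have hrw : (fun a => (f a - F) * (g a - G))
      = fun a => f a * g a - (F * g a + (G * f a - F * G)) := by
    funext a; ring
  have h1 : Integrable (fun a => G * f a - F * G) μ :=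
    (hf.const_mul G).sub (integrable_const _)
  have h2 : Integrable (fun a => F * g a + (G * f a - F * G)) μ :=
    (hg.const_mul F).add h1
  rw [hrw, integral_sub hfg h2,
    integral_add (hg.const_mul F) h1, integral_sub (hf.const_mul G) (integrable_const _),
    integral_const_mul, integral_const_mul, integral_const]
  simp [← hF, ← hG]
  ring

/-- **Debiasing identity for the covariance under MCAR zero imputation.**
If `X` is a random vector in `ℝ^d` with `E‖X‖² < ∞`, mean `m_x` and covariance `Σ_x`, and `W`
is an MCAR mask with probability vector `p ∈ (0,1]^d`, independent of `X`, then writing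
`Σ_x^NA := Cov(X⊙W)` and `m_x^NA := E[X⊙W]`, the covariance of `X` is recovered via
`Σ_x = P⁻¹ Σ_x^NA P⁻¹ + P⁻¹(I - P⁻¹) diag(Σ_x^NA) + P⁻¹(I - P⁻¹) diag(m_x^NA) diag(m_x^NA)`. -/
theorem cov_debias_hadamard_mcar_mask
    {Ω : Type*} [MeasurableSpace Ω] (μ : Measure Ω) [IsProbabilityMeasure μ]
    {d : ℕ} (X W : Ω → Fin d → ℝ) (p : Fin d → ℝ)
    (hp : ∀ i, p i ∈ Set.Ioc (0 : ℝ) 1)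
    (hXmeas : Measurable X) (hWmeas : Measurable W)
    (hX2 : Integrable (fun a => ∑ i, (X a i) ^ 2) μ)
    (hW01 : ∀ᵐ a ∂μ, ∀ i, W a i = 0 ∨ W a i = 1)
    (hWber : ∀ i, μ {a | W a i = 1} = ENNReal.ofReal (p i))
    (hWiIndep : iIndepFun (fun i a => W a i) μ)
    (hIndep : IndepFun W X μ) :
    covMatrix μ X =
      Matrix.diagonal (fun i => (p i)⁻¹) * covMatrix μ (fun a i => X a i * W a i)
          * Matrix.diagonal (fun i => (p i)⁻¹)
        + Matrix.diagonal (fun i => (p i)⁻¹) * (1 - Matrix.diagonal (fun i => (p i)⁻¹))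
            * Matrix.diagonal (fun i => covMatrix μ (fun a i => X a i * W a i) i i)
        + Matrix.diagonal (fun i => (p i)⁻¹) * (1 - Matrix.diagonal (fun i => (p i)⁻¹))
            * (Matrix.diagonal (meanVec μ (fun a i => X a i * W a i))
                * Matrix.diagonal (meanVec μ (fun a i => X a i * W a i))) := by
  have hXi : ∀ i, Measurable fun a => X a i := fun i => (measurable_pi_apply i).comp hXmeas
  have hWi : ∀ i, Measurable fun a => W a i := fun i => (measurable_pi_apply i).comp hWmeas
  -- integrability of X coordinates and products
  have hXi2int : ∀ i, Integrable (fun a => (X a i) ^ 2) μ := by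
    intro i
    refine hX2.mono' ((hXi i).pow_const 2).aestronglyMeasurable ?_
    filter_upwards with a
    have : (X a i) ^ 2 ≤ ∑ j, (X a j) ^ 2 :=
      Finset.single_le_sum (f := fun j => (X a j) ^ 2) (fun j _ => sq_nonneg _)
        (Finset.mem_univ i)
    simpa [abs_of_nonneg (sq_nonneg (X a i))] using this
  have hXiint : ∀ i, Integrable (fun a => X a i) μ := by
    intro i
    refine ((hXi2int i).add (integrable_const 1)).mono' (hXi i).aestronglyMeasurable ?_
    filter_upwards with a
    have := sq_nonneg (|X a i| - 1)
    have h2 : |X a i| ^ 2 = (X a i) ^ 2 := sq_abs _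
    simp only [Real.norm_eq_abs, Pi.add_apply]
    nlinarith [abs_nonneg (X a i)]
  have hXXint : ∀ i j, Integrable (fun a => X a i * X a j) μ := by
    intro i j
    refine ((hXi2int i).add (hXi2int j)).mono' ((hXi i).mul (hXi j)).aestronglyMeasurable ?_
    filter_upwards with a
    simp only [Real.norm_eq_abs, abs_mul, Pi.add_apply]
    nlinarith [sq_nonneg (|X a i| - |X a j|), sq_abs (X a i), sq_abs (X a j),
      abs_nonneg (X a i), abs_nonneg (X a j)]
  -- W is a.e. bounded by 1
  have hWbd : ∀ i, ∀ᵐ a ∂μ, |W a i| ≤ 1 := by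
    intro i
    filter_upwards [hW01] with a ha
    rcases ha i with h | h <;> simp [h]
  have hWiint : ∀ i, Integrable (fun a => W a i) μ := by
    intro i
    refine (integrable_const (1 : ℝ)).mono' (hWi i).aestronglyMeasurable ?_
    filter_upwards [hWbd i] with a ha using by simpa using ha
  have hWWint : ∀ i j, Integrable (fun a => W a i * W a j) μ := by
    intro i j
    refine (integrable_const (1 : ℝ)).mono' ((hWi i).mul (hWi j)).aestronglyMeasurable ?_
    filter_upwards [hWbd i, hWbd j] with a hi hj
    simp only [Real.norm_eq_abs, abs_mul]
    calc |W a i| * |W a j| ≤ 1 * 1 := by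
          exact mul_le_mul hi hj (abs_nonneg _) zero_le_one
      _ = 1 := by ring
  have hYiint : ∀ i, Integrable (fun a => X a i * W a i) μ := by
    intro i
    refine (hXiint i).abs.mono' ((hXi i).mul (hWi i)).aestronglyMeasurable ?_
    filter_upwards [hWbd i] with a ha
    simp only [Real.norm_eq_abs, abs_mul]
    calc |X a i| * |W a i| ≤ |X a i| * 1 := by
          exact mul_le_mul_of_nonneg_left ha (abs_nonneg _)
      _ = |X a i| := by ring
  have hYYint : ∀ i j, Integrable (fun a => (X a i * W a i) * (X a j * W a j)) μ := by
    intro i j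
    refine (hXXint i j).abs.mono'
      (((hXi i).mul (hWi i)).mul ((hXi j).mul (hWi j))).aestronglyMeasurable ?_
    filter_upwards [hWbd i, hWbd j] with a hi hj
    simp only [Real.norm_eq_abs, abs_mul]
    have h := mul_le_mul (mul_le_mul_of_nonneg_left hi (abs_nonneg (X a i)))
      (mul_le_mul_of_nonneg_left hj (abs_nonneg (X a j)))
      (by positivity) (mul_nonneg (abs_nonneg _) zero_le_one)
    simpa using h
  -- expectation of W coordinates
  have hEW : ∀ i, ∫ a, W a i ∂μ = p i := by
    intro i
    have hset : MeasurableSet {a | W a i = 1} := (hWi i) (measurableSet_singleton 1)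
    have hae : (fun a => W a i)
        =ᵐ[μ] Set.indicator {a | W a i = 1} (fun _ => (1 : ℝ)) := by
      filter_upwards [hW01] with a ha
      rcases ha i with h | h
      · simp [Set.indicator, h]
      · simp [Set.indicator, h]
    rw [integral_congr_ae hae, integral_indicator_const _ hset, measureReal_def, hWber i, smul_eq_mul,
      ENNReal.toReal_ofReal (hp i).1.le, mul_one]
  have hEWW : ∀ i j, i ≠ j → ∫ a, W a i * W a j ∂μ = p i * p j := by
    intro i j hij
    have h : ∫ a, W a i * W a j ∂μ = (∫ a, W a i ∂μ) * ∫ a, W a j ∂μ :=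
      (hWiIndep.indepFun hij).integral_mul_eq_mul_integral (hWiint i).aestronglyMeasurable
        (hWiint j).aestronglyMeasurable
    rw [h, hEW, hEW]
  -- expectations of the masked vector
  have hEY : ∀ i, ∫ a, X a i * W a i ∂μ = p i * ∫ a, X a i ∂μ := by
    intro i
    have hind : IndepFun (fun a => W a i) (fun a => X a i) μ :=
      hIndep.comp (measurable_pi_apply i) (measurable_pi_apply i)
    have h : ∫ a, W a i * X a i ∂μ = (∫ a, W a i ∂μ) * ∫ a, X a i ∂μ :=
      hind.integral_mul_eq_mul_integral (hWiint i).aestronglyMeasurable (hXiint i).aestronglyMeasurable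
    calc ∫ a, X a i * W a i ∂μ = ∫ a, W a i * X a i ∂μ := by
          simp [mul_comm]
      _ = (∫ a, W a i ∂μ) * ∫ a, X a i ∂μ := h
      _ = p i * ∫ a, X a i ∂μ := by rw [hEW]
  have hEYY : ∀ i j, i ≠ j →
      ∫ a, (X a i * W a i) * (X a j * W a j) ∂μ = p i * p j * ∫ a, X a i * X a j ∂μ := by
    intro i j hij
    have hind : IndepFun (fun a => W a i * W a j) (fun a => X a i * X a j) μ :=
      hIndep.comp ((measurable_pi_apply i).mul (measurable_pi_apply j))
        ((measurable_pi_apply i).mul (measurable_pi_apply j))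
    have h : ∫ a, (W a i * W a j) * (X a i * X a j) ∂μ
        = (∫ a, W a i * W a j ∂μ) * ∫ a, X a i * X a j ∂μ :=
      hind.integral_mul_eq_mul_integral (hWWint i j).aestronglyMeasurable (hXXint i j).aestronglyMeasurable
    calc ∫ a, (X a i * W a i) * (X a j * W a j) ∂μ
        = ∫ a, (W a i * W a j) * (X a i * X a j) ∂μ := by
          congr 1; funext a; ring
      _ = (∫ a, W a i * W a j ∂μ) * ∫ a, X a i * X a j ∂μ := h
      _ = p i * p j * ∫ a, X a i * X a j ∂μ := by rw [hEWW i j hij]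
  have hEY2 : ∀ i,
      ∫ a, (X a i * W a i) * (X a i * W a i) ∂μ = p i * ∫ a, X a i * X a i ∂μ := by
    intro i
    have hae : (fun a => (X a i * W a i) * (X a i * W a i))
        =ᵐ[μ] fun a => W a i * (X a i * X a i) := by
      filter_upwards [hW01] with a ha
      rcases ha i with h | h
      · simp [h]
      · simp [h]
    have hind : IndepFun (fun a => W a i) (fun a => X a i * X a i) μ :=
      hIndep.comp (measurable_pi_apply i)
        ((measurable_pi_apply i).mul (measurable_pi_apply i))
    have h : ∫ a, W a i * (X a i * X a i) ∂μ
        = (∫ a, W a i ∂μ) * ∫ a, X a i * X a i ∂μ :=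
      hind.integral_mul_eq_mul_integral (hWiint i).aestronglyMeasurable (hXXint i i).aestronglyMeasurable
    rw [integral_congr_ae hae, h, hEW]
  -- covariance expansions
  have hcovX : ∀ i j, covMatrix μ X i j
      = (∫ a, X a i * X a j ∂μ) - (∫ a, X a i ∂μ) * (∫ a, X a j ∂μ) := fun i j =>
    cov_expand μ _ _ (hXiint i) (hXiint j) (hXXint i j)
  have hcovY : ∀ i j, covMatrix μ (fun a i => X a i * W a i) i j
      = (∫ a, (X a i * W a i) * (X a j * W a j) ∂μ)
        - (∫ a, X a i * W a i ∂μ) * (∫ a, X a j * W a j ∂μ) := fun i j =>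
    cov_expand μ _ _ (hYiint i) (hYiint j) (hYYint i j)
  have hmY : ∀ i, meanVec μ (fun a i => X a i * W a i) i = p i * ∫ a, X a i ∂μ := fun i =>
    hEY i
  have hp0 : ∀ i, p i ≠ 0 := fun i => (hp i).1.ne'
  ext i j
  simp only [Matrix.add_apply, Matrix.diagonal_mul_diagonal, Matrix.mul_diagonal,
    Matrix.diagonal_mul, Matrix.sub_apply, Matrix.one_apply, Matrix.diagonal_apply,
    Pi.mul_apply]
  by_cases hij : i = j
  · subst hij
    simp only [if_pos rfl, ↓reduceIte]
    rw [hcovX, hcovY, hmY, hEY, hEY2]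
    have := hp0 i
    field_simp
    ring
  · simp only [if_neg hij]
    rw [hcovX, hcovY, hEY, hEY, hEYY i j hij]
    have := hp0 i
    have := hp0 j
    field_simp
    ring
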